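/- Fix a probability vector μ on {1,...,V}, let π be a uniformly random permutation of {1,...,V} and u ~ Unif[0,1] independent of π, and let Y = Γ((π,u),μ) be the ITS output. Then E[u | Y, π(Y)] = 1/2 + (1 - μ(Y))·((π(Y) - 1)/(V - 1) - 1/2), where the conditioning is on the value of Y and on the rank π(Y). -/

import Mathlib

open MeasureTheory ProbabilityTheory
open scoped ENNReal

/-- The inverse transform sampling decoder. -/
noncomputable def GammaITS (V : ℕ) [NeZero V] (μp : Fin V → ℝ)
    (π : Equiv.Perm (Fin V)) (u : ℝ) : Fin V :=
  π.symm
    ((Finset.univ.filter (fun r : Fin V =>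
        u ≤ ∑ j ∈ Finset.univ.filter (fun j => π j ≤ r), μp j)).min.untopD default)

namespace ITSaux

variable {V : ℕ} [NeZero V] (μp : Fin V → ℝ) (k r : Fin V)

/-- left endpoint of the interval for permutation `p`. -/
noncomputable def aseg (p : Equiv.Perm (Fin V)) : ℝ :=
  ∑ j ∈ Finset.univ.filter (fun j => p j < r), μp j

/-- cumulative distribution by rank. -/
noncomputable def Fc (p : Equiv.Perm (Fin V)) (s : Fin V) : ℝ :=
  ∑ j ∈ Finset.univ.filter (fun j => p j ≤ s), μp j

variable {μp k r}

lemma Fc_mono (hμp : ∀ j, 0 ≤ μp j) (p : Equiv.Perm (Fin V)) {s s' : Fin V} (h : s ≤ s') :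
    Fc μp p s ≤ Fc μp p s' := by
  apply Finset.sum_le_sum_of_subset_of_nonneg
  · intro j hj
    simp only [Finset.mem_filter, Finset.mem_univ, true_and] at hj ⊢
    exact hj.trans h
  · intro j _ _; exact hμp j

lemma Fc_last (hsum : ∑ j, μp j = 1) (p : Equiv.Perm (Fin V)) :
    Fc μp p ⟨V - 1, by have := NeZero.pos V; omega⟩ = 1 := by
  rw [← hsum]
  apply Finset.sum_congr _ (fun _ _ => rfl)
  rw [Finset.filter_true_of_mem]
  intro j _
  rw [Fin.le_def]
  show (p j).val ≤ V - 1
  have := (p j).isLt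
  omega

lemma aseg_nonneg (hμp : ∀ j, 0 ≤ μp j) (p : Equiv.Perm (Fin V)) : 0 ≤ aseg μp r p :=
  Finset.sum_nonneg fun j _ => hμp j

lemma Fc_r (hk : p k = r) : Fc μp p r = aseg μp r p + μp k := by
  have hins : Finset.univ.filter (fun j => p j ≤ r)
      = insert k (Finset.univ.filter (fun j => p j < r)) := by
    ext j
    simp only [Finset.mem_filter, Finset.mem_univ, true_and, Finset.mem_insert]
    constructor
    · intro hj
      rcases lt_or_eq_of_le hj with h | h
      · exact Or.inr h
      · left; apply p.injective; rw [h, hk]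
    · rintro (h | h)
      · rw [h, hk]
      · exact le_of_lt h
  rw [Fc, hins, Finset.sum_insert (by simp [hk]), add_comm]
  rfl

lemma Fc_le_aseg (hμp : ∀ j, 0 ≤ μp j) (p : Equiv.Perm (Fin V)) {s : Fin V} (hs : s < r) :
    Fc μp p s ≤ aseg μp r p := by
  apply Finset.sum_le_sum_of_subset_of_nonneg
  · intro j hj
    simp only [Finset.mem_filter, Finset.mem_univ, true_and] at hj ⊢
    exact lt_of_le_of_lt hj hs
  · intro j _ _; exact hμp j

lemma aseg_le_one (hμp : ∀ j, 0 ≤ μp j) (hsum : ∑ j, μp j = 1) (hk : p k = r) :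
    aseg μp r p + μp k ≤ 1 := by
  rw [← Fc_r hk, ← Fc_last (μp := μp) hsum p]
  apply Fc_mono hμp p
  rw [Fin.le_def]
  show r.val ≤ V - 1
  have := r.isLt
  omega

lemma gamma_char (hμp : ∀ j, 0 ≤ μp j) (hsum : ∑ j, μp j = 1)
    (p : Equiv.Perm (Fin V)) (x : ℝ) (hx : x ∈ Set.Ioc (0 : ℝ) 1) (hk : p k = r) :
    GammaITS V μp p x = k ↔ x ∈ Set.Ioc (aseg μp r p) (aseg μp r p + μp k) := by
  classical
  set S : Finset (Fin V) := Finset.univ.filter (fun s : Fin V => x ≤ Fc μp p s) with hS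
  have hlast : (⟨V - 1, by have := NeZero.pos V; omega⟩ : Fin V) ∈ S := by
    simp only [hS, Finset.mem_filter, Finset.mem_univ, true_and]
    rw [Fc_last hsum]
    exact hx.2
  have hne : S.Nonempty := ⟨_, hlast⟩
  have huntop : (S.min.untopD default) = S.min' hne := by
    rw [← Finset.coe_min' hne, WithTop.untopD_coe]
  have hgam : GammaITS V μp p x = p.symm (S.min' hne) := by
    rw [GammaITS, ← huntop]; rfl
  rw [hgam, Equiv.symm_apply_eq]
  constructor
  · intro hmin
    have hminr : S.min' hne = r := hmin.trans hk
    have hrS : r ∈ S := hminr ▸ S.min'_mem hne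
    have hxb : x ≤ aseg μp r p + μp k := by
      rw [← Fc_r hk]
      simpa only [hS, Finset.mem_filter, Finset.mem_univ, true_and] using hrS
    have hxa : aseg μp r p < x := by
      rcases Nat.eq_zero_or_pos r.val with h0 | h0
      · have hz : aseg μp r p = 0 := by
          rw [aseg]
          apply Finset.sum_eq_zero
          intro j hj
          simp only [Finset.mem_filter, Finset.mem_univ, true_and, Fin.lt_def, h0] at hj
          omega
        rw [hz]; exact hx.1
      · set r' : Fin V := ⟨r.val - 1, by omega⟩ with hr'
        have hr'lt : r' < r := by rw [Fin.lt_def]; simp only [hr']; omega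
        have hr'S : r' ∉ S := by
          intro hmem
          have := S.min'_le r' hmem
          rw [hminr] at this
          exact absurd hr'lt (not_lt.mpr this)
        have hFlt : Fc μp p r' < x := by
          by_contra hle
          push_neg at hle
          exact hr'S (by simp only [hS, Finset.mem_filter, Finset.mem_univ, true_and]; exact hle)
        have heq : aseg μp r p = Fc μp p r' := by
          rw [aseg, Fc]
          apply Finset.sum_congr _ (fun _ _ => rfl)
          apply Finset.filter_congr
          intro j _
          simp only [Fin.lt_def, Fin.le_def, hr', eq_iff_iff]
          omega
        rw [heq]; exact hFlt
    exact ⟨hxa, hxb⟩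
  · rintro ⟨hxa, hxb⟩
    have hrS : r ∈ S := by
      simp only [hS, Finset.mem_filter, Finset.mem_univ, true_and]
      rw [Fc_r hk]; exact hxb
    rw [hk]
    apply le_antisymm (S.min'_le r hrS)
    apply S.le_min'
    intro y hy
    by_contra hlt
    push_neg at hlt
    have : x ≤ Fc μp p y := by
      simpa only [hS, Finset.mem_filter, Finset.mem_univ, true_and] using hy
    exact absurd (this.trans (Fc_le_aseg hμp p hlt)) (not_le.mpr hxa)


lemma card_filter_lt (p : Equiv.Perm (Fin V)) :
    (Finset.univ.filter (fun j => p j < r)).card = r.val := by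
  classical
  rw [show (r.val : ℕ) = (Finset.Iio r).card from (Fin.card_Iio r).symm]
  apply Finset.card_nbij' (i := fun j => p j) (j := fun s => p.symm s)
  · intro a ha
    simp only [Finset.mem_coe, Finset.mem_filter, Finset.mem_univ, true_and] at ha
    simpa [Finset.mem_Iio] using ha
  · intro a ha
    simp only [Finset.mem_coe, Finset.mem_Iio] at ha
    simp only [Finset.mem_coe, Finset.mem_filter, Finset.mem_univ, true_and, Equiv.apply_symm_apply]
    exact ha
  · intro a _; simp
  · intro a _; simp

lemma comb (hV : 2 ≤ V) (hμp : ∀ j, 0 ≤ μp j) (hsum : ∑ j, μp j = 1) :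
    ((V : ℝ) - 1) * ∑ p ∈ Finset.univ.filter (fun p : Equiv.Perm (Fin V) => p k = r),
        aseg μp r p
      = (1 - μp k) * (r.val : ℝ) *
        ((Finset.univ.filter (fun p : Equiv.Perm (Fin V) => p k = r)).card : ℝ) := by
  classical
  set P := Finset.univ.filter (fun p : Equiv.Perm (Fin V) => p k = r) with hP
  set N : Fin V → ℕ := fun j => (P.filter (fun p => p j < r)).card with hN
  -- swap sums
  have hswap : ∑ p ∈ P, aseg μp r p = ∑ j ∈ Finset.univ.erase k, μp j * (N j : ℝ) := by
    have h1 : ∀ p ∈ P, aseg μp r p = ∑ j, if p j < r then μp j else 0 := by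
      intro p _
      rw [aseg, Finset.sum_filter]
    rw [Finset.sum_congr rfl h1, Finset.sum_comm]
    have h2 : ∀ j : Fin V, ∑ p ∈ P, (if p j < r then μp j else 0) = μp j * (N j : ℝ) := by
      intro j
      rw [← Finset.sum_filter, Finset.sum_const, hN, nsmul_eq_mul, mul_comm]
    rw [Finset.sum_congr rfl (fun j _ => h2 j)]
    have hNk : N k = 0 := by
      rw [hN]
      simp only [Finset.card_eq_zero]
      apply Finset.filter_eq_empty_iff.mpr
      intro p hp
      simp only [hP, Finset.mem_filter, Finset.mem_univ, true_and] at hp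
      rw [hp]
      exact lt_irrefl r
    rw [← Finset.add_sum_erase _ _ (Finset.mem_univ k), hNk]
    simp
  -- all N j equal for j ≠ k
  have hBij : ∀ j ∈ Finset.univ.erase k, ∀ j' ∈ Finset.univ.erase k, N j = N j' := by
    intro j hj j' hj'
    simp only [Finset.mem_erase, Finset.mem_univ, and_true] at hj hj'
    rw [hN]
    apply Finset.card_nbij' (i := fun p => p * Equiv.swap j j') (j := fun p => p * Equiv.swap j j')
    · intro p hp
      simp only [hP, Finset.mem_coe, Finset.mem_filter, Finset.mem_univ, true_and] at hp ⊢
      refine ⟨?_, ?_⟩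
      · rw [Equiv.Perm.mul_apply, Equiv.swap_apply_of_ne_of_ne (Ne.symm hj) (Ne.symm hj')]
        exact hp.1
      · rw [Equiv.Perm.mul_apply, Equiv.swap_apply_right]
        exact hp.2
    · intro p hp
      simp only [hP, Finset.mem_coe, Finset.mem_filter, Finset.mem_univ, true_and] at hp ⊢
      refine ⟨?_, ?_⟩
      · rw [Equiv.Perm.mul_apply, Equiv.swap_apply_of_ne_of_ne (Ne.symm hj) (Ne.symm hj')]
        exact hp.1
      · rw [Equiv.Perm.mul_apply, Equiv.swap_apply_left]
        exact hp.2
    · intro p _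
      beta_reduce
      rw [mul_assoc, Equiv.swap_mul_self, mul_one]
    · intro p _
      beta_reduce
      rw [mul_assoc, Equiv.swap_mul_self, mul_one]
  -- double counting
  have hdc : ∑ j ∈ Finset.univ.erase k, N j = r.val * P.card := by
    have h1 : ∀ j ∈ Finset.univ.erase k, N j = ∑ p ∈ P, if p j < r then 1 else 0 := by
      intro j _
      simp only [hN]
      rw [Finset.card_filter]
    rw [Finset.sum_congr rfl h1, Finset.sum_comm]
    have h2 : ∀ p ∈ P, ∑ j ∈ Finset.univ.erase k, (if p j < r then 1 else 0) = r.val := by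
      intro p hp
      simp only [hP, Finset.mem_filter, Finset.mem_univ, true_and] at hp
      rw [← Finset.card_filter, Finset.filter_erase, Finset.erase_eq_of_notMem,
        card_filter_lt]
      simp only [Finset.mem_filter, Finset.mem_univ, true_and, hp]
      exact lt_irrefl r
    rw [Finset.sum_congr rfl h2, Finset.sum_const, smul_eq_mul, mul_comm]
  -- card of erase
  have hcard : (Finset.univ.erase k).card = V - 1 := by
    rw [Finset.card_erase_of_mem (Finset.mem_univ k), Finset.card_univ, Fintype.card_fin]
  -- constant value: for each j in erase k, (V-1) * N j = r.val * P.card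
  have hconst : ∀ j ∈ Finset.univ.erase k, (V - 1) * N j = r.val * P.card := by
    intro j hj
    have : ∑ j' ∈ Finset.univ.erase k, N j' = (V - 1) * N j := by
      rw [Finset.sum_congr rfl (fun j' hj' => hBij j' hj' j hj), Finset.sum_const, hcard,
        smul_eq_mul]
    rw [← this, hdc]
  -- sum of μp over erase k
  have herase : ∑ j ∈ Finset.univ.erase k, μp j = 1 - μp k := by
    have := Finset.add_sum_erase Finset.univ μp (Finset.mem_univ k)
    rw [hsum] at this
    linarith
  -- conclude
  rw [hswap, Finset.mul_sum]
  have hstep : ∀ j ∈ Finset.univ.erase k,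
      ((V : ℝ) - 1) * (μp j * (N j : ℝ)) = μp j * ((r.val : ℝ) * (P.card : ℝ)) := by
    intro j hj
    have h := hconst j hj
    have : ((V : ℝ) - 1) * (N j : ℝ) = (r.val : ℝ) * (P.card : ℝ) := by
      have hcast : (((V - 1) * N j : ℕ) : ℝ) = ((r.val * P.card : ℕ) : ℝ) := by rw [h]
      push_cast at hcast
      rw [Nat.cast_sub (by omega)] at hcast
      push_cast at hcast
      linarith [hcast]
    calc ((V : ℝ) - 1) * (μp j * (N j : ℝ)) = μp j * (((V : ℝ) - 1) * (N j : ℝ)) := by ring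
      _ = μp j * ((r.val : ℝ) * (P.card : ℝ)) := by rw [this]
  rw [Finset.sum_congr rfl hstep, ← Finset.sum_mul, herase]
  ring


end ITSaux

/-- For the ITS output `Y` with uniformly random permutation `π` and independent
`u ~ Unif[0,1]`: `E[u | Y, π(Y)] = 1/2 + (1 - μ(Y))((π(Y)-1)/(V-1) - 1/2)`.
Here ranks in `{1,…,V}` are encoded by `Fin V`, so `(π(Y)-1)` is `(r : ℝ)` for `r : Fin V`. -/


theorem its_conditional_mean_u
    {Ω : Type*} [MeasurableSpace Ω] (μ : Measure Ω) [IsProbabilityMeasure μ]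
    (V : ℕ) [NeZero V] (hV : 2 ≤ V)
    (μp : Fin V → ℝ) (hμp : ∀ k, 0 ≤ μp k) (hsum : ∑ k, μp k = 1)
    (π : Ω → Equiv.Perm (Fin V)) (u : Ω → ℝ) (hu : Measurable u)
    (hunif : Measure.map u μ = volume.restrict (Set.Ioc (0 : ℝ) 1))
    (hπunif : ∀ p0 : Equiv.Perm (Fin V),
      μ {ω | π ω = p0} = (Nat.factorial V : ℝ≥0∞)⁻¹)
    (hindep : ∀ (s : Set ℝ), MeasurableSet s → ∀ p0 : Equiv.Perm (Fin V),
      μ {ω | π ω = p0 ∧ u ω ∈ s} = μ {ω | π ω = p0} * μ {ω | u ω ∈ s}) :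
    ∀ (k r : Fin V),
      ∫ ω in {ω | GammaITS V μp (π ω) (u ω) = k ∧ π ω k = r}, u ω ∂μ
        = (1 / 2 + (1 - μp k) * ((r : ℝ) / (V - 1) - 1 / 2))
            * (μ {ω | GammaITS V μp (π ω) (u ω) = k ∧ π ω k = r}).toReal := by
  classical
  intro k r
  -- basic facts about u
  have humem : ∀ (s : Set ℝ), MeasurableSet s → μ {ω | u ω ∈ s} = volume (s ∩ Set.Ioc 0 1) := by
    intro s hs
    show μ (u ⁻¹' s) = _
    rw [← Measure.map_apply hu hs, hunif, Measure.restrict_apply hs]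
  have hunull : μ ({ω | u ω ∈ Set.Ioc (0:ℝ) 1}ᶜ) = 0 := by
    have h := humem (Set.Ioc (0:ℝ) 1)ᶜ measurableSet_Ioc.compl
    have h2 : ((Set.Ioc (0:ℝ) 1)ᶜ ∩ Set.Ioc 0 1) = ∅ := Set.compl_inter_self _
    have h3 : ({ω | u ω ∈ Set.Ioc (0:ℝ) 1}ᶜ) = {ω | u ω ∈ (Set.Ioc (0:ℝ) 1)ᶜ} := rfl
    rw [h3, h, h2, measure_empty]
  have huae : ∀ᵐ ω ∂μ, u ω ∈ Set.Ioc (0:ℝ) 1 := by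
    rw [ae_iff]
    exact hunull
  have hintu : Integrable u μ := by
    apply Integrable.mono' (integrable_const (1:ℝ)) hu.aestronglyMeasurable
    filter_upwards [huae] with ω hω
    rw [Real.norm_eq_abs, abs_le]
    exact ⟨by linarith [hω.1], hω.2⟩
  set m : ℝ := μp k with hm
  have hm0 : 0 ≤ m := hμp k
  set P : Finset (Equiv.Perm (Fin V)) := Finset.univ.filter (fun p => p k = r) with hP
  have hPmem : ∀ p : Equiv.Perm (Fin V), p ∈ P ↔ p k = r := by
    intro p; simp [hP]
  set Sp : Equiv.Perm (Fin V) → Set Ω := fun p => {ω | π ω = p} with hSp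
  set Ip : Equiv.Perm (Fin V) → Set ℝ :=
    fun p => Set.Ioc (ITSaux.aseg μp r p) (ITSaux.aseg μp r p + m) with hIp
  have hIpsub : ∀ p ∈ P, Ip p ⊆ Set.Ioc (0:ℝ) 1 := by
    intro p hp x hx
    have hk : p k = r := (hPmem p).mp hp
    exact ⟨lt_of_le_of_lt (ITSaux.aseg_nonneg hμp p) hx.1,
      hx.2.trans (ITSaux.aseg_le_one hμp hsum hk)⟩
  set A : Equiv.Perm (Fin V) → Set Ω := fun p => Sp p ∩ u ⁻¹' (Ip p) with hA
  set E : Set Ω := {ω | GammaITS V μp (π ω) (u ω) = k ∧ π ω k = r} with hE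
  -- event characterization
  have hEeq : E ∩ {ω | u ω ∈ Set.Ioc (0:ℝ) 1} = ⋃ p ∈ P, A p := by
    ext ω
    simp only [hE, hA, hSp, hIp, Set.mem_inter_iff, Set.mem_setOf_eq, Set.mem_iUnion,
      Set.mem_preimage]
    constructor
    · rintro ⟨⟨hg, hr⟩, hmem⟩
      exact ⟨π ω, (hPmem _).mpr hr, rfl,
        (ITSaux.gamma_char hμp hsum (π ω) (u ω) hmem hr).mp hg⟩
    · rintro ⟨p, hpP, hπ, hux⟩
      have hk2 : p k = r := (hPmem p).mp hpP
      have hmem : u ω ∈ Set.Ioc (0:ℝ) 1 := hIpsub p hpP hux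
      refine ⟨⟨?_, by rw [hπ]; exact hk2⟩, hmem⟩
      rw [hπ]
      exact (ITSaux.gamma_char hμp hsum p (u ω) hmem hk2).mpr hux
  have hEae : E =ᵐ[μ] ⋃ p ∈ P, A p := by
    rw [MeasureTheory.ae_eq_set]
    constructor
    · apply measure_mono_null _ hunull
      intro ω hω
      simp only [Set.mem_diff] at hω
      intro hmem
      exact hω.2 (hEeq ▸ Set.mem_inter hω.1 hmem)
    · have hsub2 : (⋃ p ∈ P, A p) \ E = ∅ := by
        rw [Set.diff_eq_empty]
        rw [← hEeq]
        exact Set.inter_subset_left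
      rw [hsub2, measure_empty]
  -- null-measurable partition
  set Tm : Equiv.Perm (Fin V) → Set Ω := fun p => toMeasurable μ (Sp p) with hTm
  have hTmeas : ∀ p, MeasurableSet (Tm p) := fun p => measurableSet_toMeasurable μ _
  have hμT : ∀ p, μ (Tm p) = (Nat.factorial V : ℝ≥0∞)⁻¹ := by
    intro p
    rw [hTm]
    simp only [measure_toMeasurable]
    exact hπunif p
  have hsub : ∀ p, Sp p ⊆ Tm p := fun p => subset_toMeasurable μ _
  set U : Equiv.Perm (Fin V) → Set Ω := fun p => ⋃ q ∈ Finset.univ.erase p, Tm q with hU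
  have hUmeas : ∀ p, MeasurableSet (U p) :=
    fun p => (Finset.univ.erase p).measurableSet_biUnion (fun q _ => hTmeas q)
  have hSpU : ∀ p q, p ≠ q → Sp q ⊆ U p := by
    intro p q hpq
    intro x hx
    rw [hU]
    exact Set.mem_biUnion (Finset.mem_erase.mpr ⟨Ne.symm hpq, Finset.mem_univ _⟩) (hsub q hx)
  have hUnull : ∀ p, μ (Tm p ∩ U p) = 0 := by
    intro p
    have hcover : Tm p ∪ U p = Set.univ := by
      rw [Set.eq_univ_iff_forall]
      intro ω
      rcases eq_or_ne (π ω) p with h | h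
      · exact Or.inl (hsub p h)
      · exact Or.inr (hSpU p (π ω) (Ne.symm h) rfl)
    have h1 : μ (Tm p ∪ U p) + μ (Tm p ∩ U p) = μ (Tm p) + μ (U p) :=
      measure_union_add_inter _ (hUmeas p)
    have h2 : μ (U p) ≤ ∑ q ∈ Finset.univ.erase p, μ (Tm q) := measure_biUnion_finset_le _ _
    have hcarderase : (Finset.univ.erase p).card = Fintype.card (Equiv.Perm (Fin V)) - 1 := by
      rw [Finset.card_erase_of_mem (Finset.mem_univ p), Finset.card_univ]
    have h3 : ∑ q ∈ Finset.univ.erase p, μ (Tm q)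
        = ((Fintype.card (Equiv.Perm (Fin V)) - 1 : ℕ) : ℝ≥0∞)
            * (Nat.factorial V : ℝ≥0∞)⁻¹ := by
      rw [Finset.sum_congr rfl (fun q _ => hμT q), Finset.sum_const, hcarderase,
        nsmul_eq_mul]
    have hcard1 : 1 ≤ Fintype.card (Equiv.Perm (Fin V)) := Fintype.card_pos
    have hcast : ((1 : ℝ≥0∞) + ((Fintype.card (Equiv.Perm (Fin V)) - 1 : ℕ) : ℝ≥0∞))
        = ((Fintype.card (Equiv.Perm (Fin V)) : ℕ) : ℝ≥0∞) := by
      rw [← Nat.cast_one (R := ℝ≥0∞), ← Nat.cast_add]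
      congr 1
      omega
    have h4 : μ (Tm p) + μ (U p)
        ≤ ((Fintype.card (Equiv.Perm (Fin V)) : ℕ) : ℝ≥0∞)
            * (Nat.factorial V : ℝ≥0∞)⁻¹ := by
      rw [hμT p, ← hcast, add_mul, one_mul]
      exact add_le_add le_rfl (h2.trans (le_of_eq h3))
    have h5 : ((Fintype.card (Equiv.Perm (Fin V)) : ℕ) : ℝ≥0∞)
        * (Nat.factorial V : ℝ≥0∞)⁻¹ = 1 := by
      rw [Fintype.card_perm, Fintype.card_fin]
      exact ENNReal.mul_inv_cancel (by exact_mod_cast (Nat.factorial_pos V).ne')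
        (by simp)
    have h6 : (1 : ℝ≥0∞) + μ (Tm p ∩ U p) ≤ 1 + 0 := by
      rw [add_zero]
      calc (1 : ℝ≥0∞) + μ (Tm p ∩ U p) = μ (Tm p ∪ U p) + μ (Tm p ∩ U p) := by
            rw [hcover, measure_univ]
        _ = μ (Tm p) + μ (U p) := h1
        _ ≤ 1 := h5 ▸ h4
    have h7 : μ (Tm p ∩ U p) ≤ 0 :=
      (ENNReal.add_le_add_iff_left (a := (1:ℝ≥0∞)) ENNReal.one_ne_top).mp h6
    exact le_antisymm h7 zero_le
  set C : Equiv.Perm (Fin V) → Set Ω := fun p => Tm p \ U p with hC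
  have hCmeas : ∀ p, MeasurableSet (C p) := fun p => (hTmeas p).diff (hUmeas p)
  have hCdisj : Pairwise (Function.onFun Disjoint C) := by
    intro p q hpq
    rw [Function.onFun, Set.disjoint_left]
    intro x hxp hxq
    have hTpUq : Tm p ⊆ U q := by
      intro y hy
      rw [hU]
      exact Set.mem_biUnion (Finset.mem_erase.mpr ⟨hpq, Finset.mem_univ _⟩) hy
    exact hxq.2 (hTpUq hxp.1)
  have hCS : ∀ p, C p ⊆ Sp p := by
    intro p x hx
    by_contra hxS
    have : π x ≠ p := hxS
    exact hx.2 (hSpU p (π x) (Ne.symm this) rfl)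
  have hSC : ∀ p, Sp p =ᵐ[μ] C p := by
    intro p
    rw [MeasureTheory.ae_eq_set]
    constructor
    · apply measure_mono_null _ (hUnull p)
      intro x hx
      refine ⟨hsub p hx.1, ?_⟩
      by_contra hxU
      exact hx.2 ⟨hsub p hx.1, hxU⟩
    · have : C p \ Sp p = ∅ := Set.diff_eq_empty.mpr (hCS p)
      rw [this, measure_empty]
  set D : Equiv.Perm (Fin V) → Set Ω := fun p => C p ∩ u ⁻¹' (Ip p) with hD
  have hDmeas : ∀ p, MeasurableSet (D p) := fun p => (hCmeas p).inter (hu measurableSet_Ioc)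
  have hDdisj : Pairwise (Function.onFun Disjoint D) := by
    intro p q hpq
    exact Set.disjoint_of_subset Set.inter_subset_left Set.inter_subset_left (hCdisj hpq)
  have hAD : ∀ p, A p =ᵐ[μ] D p := by
    intro p
    rw [MeasureTheory.ae_eq_set]
    constructor
    · apply measure_mono_null _ ((MeasureTheory.ae_eq_set.mp (hSC p)).1)
      intro x hx
      exact ⟨hx.1.1, fun hxC => hx.2 ⟨hxC, hx.1.2⟩⟩
    · apply measure_mono_null _ ((MeasureTheory.ae_eq_set.mp (hSC p)).2)
      intro x hx
      exact ⟨hx.1.1, fun hxS => hx.2 ⟨hxS, hx.1.2⟩⟩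
  have hADU : (⋃ p ∈ P, A p) =ᵐ[μ] ⋃ p ∈ P, D p := by
    rw [MeasureTheory.ae_eq_set]
    constructor
    · refine measure_mono_null ?_
        ((measure_biUnion_null_iff P.countable_toSet).mpr
          (fun p _ => (MeasureTheory.ae_eq_set.mp (hAD p)).1))
      intro x hx
      simp only [Set.mem_diff, Set.mem_iUnion] at hx ⊢
      obtain ⟨⟨p, hp, hxA⟩, hnx⟩ := hx
      exact ⟨p, hp, hxA, fun hxD => hnx ⟨p, hp, hxD⟩⟩
    · refine measure_mono_null ?_
        ((measure_biUnion_null_iff P.countable_toSet).mpr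
          (fun p _ => (MeasureTheory.ae_eq_set.mp (hAD p)).2))
      intro x hx
      simp only [Set.mem_diff, Set.mem_iUnion] at hx ⊢
      obtain ⟨⟨p, hp, hxD⟩, hnx⟩ := hx
      exact ⟨p, hp, hxD, fun hxA => hnx ⟨p, hp, hxA⟩⟩
  have hED : E =ᵐ[μ] ⋃ p ∈ P, D p := hEae.trans hADU
  -- per-permutation computations
  have hmap : ∀ p : Equiv.Perm (Fin V), Measure.map u (μ.restrict (Sp p))
      = (Nat.factorial V : ℝ≥0∞)⁻¹ • (volume.restrict (Set.Ioc (0:ℝ) 1)) := by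
    intro p
    ext s hs
    rw [Measure.map_apply hu hs, Measure.restrict_apply (hu hs), Measure.smul_apply,
      smul_eq_mul, Measure.restrict_apply hs]
    have hset : u ⁻¹' s ∩ Sp p = {ω | π ω = p ∧ u ω ∈ s} := by
      ext ω
      simp only [hSp, Set.mem_inter_iff, Set.mem_preimage, Set.mem_setOf_eq]
      exact and_comm
    rw [hset, hindep s hs p, hπunif p, humem s hs]
  set Q : ℝ := ((Nat.factorial V : ℝ≥0∞)⁻¹).toReal with hQ
  have hAint : ∀ p ∈ P, ∫ ω in A p, u ω ∂μ
      = Q * (m * ITSaux.aseg μp r p + m ^ 2 / 2) := by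
    intro p hp
    have haseg0 : (0:ℝ) ≤ ITSaux.aseg μp r p := ITSaux.aseg_nonneg hμp p
    have hmle : ITSaux.aseg μp r p ≤ ITSaux.aseg μp r p + m := by linarith
    have step1 : ∫ ω in A p, u ω ∂μ = ∫ ω in u ⁻¹' (Ip p), u ω ∂(μ.restrict (Sp p)) := by
      rw [MeasureTheory.Measure.restrict_restrict (hu measurableSet_Ioc)]
      rw [show u ⁻¹' (Ip p) ∩ Sp p = A p from by rw [hA]; exact Set.inter_comm _ _]
    have step2 : ∫ ω in u ⁻¹' (Ip p), u ω ∂(μ.restrict (Sp p))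
        = ∫ x in Ip p, x ∂(Measure.map u (μ.restrict (Sp p))) := by
      exact (setIntegral_map measurableSet_Ioc aestronglyMeasurable_id
        hu.aemeasurable).symm
    have step3 : ∫ x in Ip p, x ∂(Measure.map u (μ.restrict (Sp p)))
        = Q * ∫ x in Ip p, x ∂(volume.restrict (Set.Ioc (0:ℝ) 1)) := by
      rw [hmap p, Measure.restrict_smul, integral_smul_measure, smul_eq_mul, hQ]
    have step4 : ∫ x in Ip p, x ∂(volume.restrict (Set.Ioc (0:ℝ) 1))
        = ∫ x in Ip p, x ∂(volume : Measure ℝ) := by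
      rw [MeasureTheory.Measure.restrict_restrict measurableSet_Ioc,
        Set.inter_eq_left.mpr (hIpsub p hp)]
    have step5 : ∫ x in Ip p, x ∂(volume : Measure ℝ)
        = m * ITSaux.aseg μp r p + m ^ 2 / 2 := by
      rw [hIp]
      rw [← intervalIntegral.integral_of_le hmle, integral_id]
      ring
    rw [step1, step2, step3, step4, step5]
  have hAmeas : ∀ p ∈ P, μ (A p) = (Nat.factorial V : ℝ≥0∞)⁻¹ * ENNReal.ofReal m := by
    intro p hp
    have hset : A p = {ω | π ω = p ∧ u ω ∈ Ip p} := by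
      ext ω
      simp only [hA, hSp, Set.mem_inter_iff, Set.mem_preimage, Set.mem_setOf_eq]
    rw [hset, hindep (Ip p) measurableSet_Ioc p, hπunif p, humem _ measurableSet_Ioc,
      Set.inter_eq_left.mpr (hIpsub p hp), hIp]
    simp only [Real.volume_Ioc, add_sub_cancel_left]
  -- integral of E
  have hintE : ∫ ω in E, u ω ∂μ = ∑ p ∈ P, (Q * (m * ITSaux.aseg μp r p + m ^ 2 / 2)) := by
    rw [setIntegral_congr_set hED]
    rw [integral_biUnion_finset P (fun p _ => hDmeas p)
      (fun p _ q _ hpq => hDdisj hpq) (fun p _ => hintu.integrableOn)]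
    apply Finset.sum_congr rfl
    intro p hp
    rw [← setIntegral_congr_set (hAD p), hAint p hp]
  have hmeasE : μ E = P.card * ((Nat.factorial V : ℝ≥0∞)⁻¹ * ENNReal.ofReal m) := by
    rw [measure_congr hED, measure_biUnion_finset
      (fun p _ q _ hpq => hDdisj hpq) (fun p _ => hDmeas p)]
    rw [Finset.sum_congr rfl (fun p hp => (measure_congr (hAD p)).symm.trans (hAmeas p hp))]
    rw [Finset.sum_const, nsmul_eq_mul]
  have hmeasE' : (μ E).toReal = P.card * (Q * m) := by
    rw [hmeasE, ENNReal.toReal_mul, ENNReal.toReal_mul, ENNReal.toReal_natCast,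
      ENNReal.toReal_ofReal hm0, hQ]
  -- final algebra
  have key := ITSaux.comb (k := k) (r := r) hV hμp hsum
  rw [hintE, hmeasE']
  have hVne : (V : ℝ) - 1 ≠ 0 := by
    have : (2:ℝ) ≤ (V:ℝ) := by exact_mod_cast hV
    linarith
  have hsum_split : ∑ p ∈ P, (Q * (m * ITSaux.aseg μp r p + m ^ 2 / 2))
      = Q * m * (∑ p ∈ P, ITSaux.aseg μp r p) + P.card * (Q * (m ^ 2 / 2)) := by
    rw [Finset.sum_congr rfl (fun p _ => by ring :
        ∀ p ∈ P, Q * (m * ITSaux.aseg μp r p + m ^ 2 / 2)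
          = Q * m * ITSaux.aseg μp r p + Q * (m ^ 2 / 2)),
      Finset.sum_add_distrib, ← Finset.mul_sum, Finset.sum_const, nsmul_eq_mul]
  rw [hsum_split]
  rw [← hP] at key
  have hSig : ∑ p ∈ P, ITSaux.aseg μp r p
      = (1 - m) * (r.val : ℝ) * (P.card : ℝ) / ((V : ℝ) - 1) := by
    rw [eq_div_iff hVne]
    linarith [key]
  rw [hSig]
  have hrr : ((r : Fin V) : ℝ) = (r.val : ℝ) := rfl
  rw [hrr]
  field_simp
  ring
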